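/- Let ε > 0 and let (f, g) be a pair of ε-potentials. Then f is convex on Ω₀ and continuously differentiable on Ω₀, with derivative f'(x) = (∫_{S_x} y dμ₁(y))/μ₁(S_x) for every x ∈ Ω₀; moreover f'(x) belongs to the interior of the interval S_x for every x ∈ Ω₀. -/

import Mathlib

open MeasureTheory Set
open scoped Classical ENNReal

noncomputable section

/-- `μ` is a probability measure supported on `[a,b]` with continuous density `u`
bounded below by `lam` and above by `Lam` on `[a,b]`. -/
def IsGoodMarginal (μ : Measure ℝ) (u : ℝ → ℝ) (a b lam Lam : ℝ) : Prop :=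
  IsProbabilityMeasure μ ∧
  μ = (volume.restrict (Icc a b)).withDensity (fun x => ENNReal.ofReal (u x)) ∧
  ContinuousOn u (Icc a b) ∧
  ∀ x ∈ Icc a b, lam ≤ u x ∧ u x ≤ Lam

/-- `(f,g)` is a pair of `ε`-potentials for the quadratically regularized OT problem. -/
def IsPotentialPair (μ₀ μ₁ : Measure ℝ) (a₀ b₀ a₁ b₁ ε : ℝ) (f g : ℝ → ℝ) : Prop :=
  (∃ K, LipschitzOnWith K f (Icc a₀ b₀)) ∧
  (∃ K, LipschitzOnWith K g (Icc a₁ b₁)) ∧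
  (∀ x ∈ Icc a₀ b₀, ∫ y in Icc a₁ b₁, max (x * y - f x - g y) 0 ∂μ₁ = ε) ∧
  (∀ y ∈ Icc a₁ b₁, ∫ x in Icc a₀ b₀, max (x * y - f x - g y) 0 ∂μ₀ = ε)

/-- the `x`-section `S_x` of the support of the optimal coupling. -/
def secX (f g : ℝ → ℝ) (a₁ b₁ x : ℝ) : Set ℝ :=
  {y ∈ Icc a₁ b₁ | 0 ≤ x * y - f x - g y}

/-- the `y`-section `S^y` of the support of the optimal coupling. -/
def secY (f g : ℝ → ℝ) (a₀ b₀ y : ℝ) : Set ℝ :=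
  {x ∈ Icc a₀ b₀ | 0 ≤ x * y - f x - g y}

/-- `T_ε(x) = (∫_{S_x} y dμ₁)/μ₁(S_x)`, the derivative `f'` of the potential `f`. -/
def Tmap (μ₁ : Measure ℝ) (f g : ℝ → ℝ) (a₁ b₁ x : ℝ) : ℝ :=
  (∫ y in secX f g a₁ b₁ x, y ∂μ₁) / (μ₁ (secX f g a₁ b₁ x)).toReal

/-- the symmetric quantity, the derivative `g'` of the potential `g`. -/
def Gmap (μ₀ : Measure ℝ) (f g : ℝ → ℝ) (a₀ b₀ y : ℝ) : ℝ :=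
  (∫ x in secY f g a₀ b₀ y, x ∂μ₀) / (μ₀ (secY f g a₀ b₀ y)).toReal

/-- left endpoint `y_m(x)` of `S_x`. -/
def ymF (f g : ℝ → ℝ) (a₁ b₁ x : ℝ) : ℝ := sInf (secX f g a₁ b₁ x)

/-- right endpoint `y_M(x)` of `S_x`. -/
def yMF (f g : ℝ → ℝ) (a₁ b₁ x : ℝ) : ℝ := sSup (secX f g a₁ b₁ x)

/-- left endpoint `x_m(y)` of `S^y`. -/
def xmF (f g : ℝ → ℝ) (a₀ b₀ y : ℝ) : ℝ := sInf (secY f g a₀ b₀ y)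

/-- right endpoint `x_M(y)` of `S^y`. -/
def xMF (f g : ℝ → ℝ) (a₀ b₀ y : ℝ) : ℝ := sSup (secY f g a₀ b₀ y)

/-- `T₀` is the (nondecreasing) Monge map from `μ₀` to `μ₁`. -/
def IsMongeMap (μ₀ μ₁ : Measure ℝ) (T₀ : ℝ → ℝ) : Prop :=
  Monotone T₀ ∧ Measure.map T₀ μ₀ = μ₁

/-- convex conjugate relative to `[a,b]`. -/
def conjOn (f : ℝ → ℝ) (a b y : ℝ) : ℝ := sSup ((fun x => x * y - f x) '' Icc a b)

section core

variable {a₀ b₀ a₁ b₁ ε : ℝ} {μ₁ : Measure ℝ} {f g : ℝ → ℝ} {x x' : ℝ}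

lemma mem_secX {f g : ℝ → ℝ} {a₁ b₁ x y : ℝ} :
    y ∈ secX f g a₁ b₁ x ↔ y ∈ Icc a₁ b₁ ∧ 0 ≤ x * y - f x - g y := Iff.rfl

lemma secX_subset : secX f g a₁ b₁ x ⊆ Icc a₁ b₁ := fun _ hy => hy.1

lemma isClosed_secX (hg : ContinuousOn g (Icc a₁ b₁)) (x : ℝ) :
    IsClosed (secX f g a₁ b₁ x) := by
  have : secX f g a₁ b₁ x
      = Icc a₁ b₁ ∩ (fun y => x * y - f x - g y) ⁻¹' (Ici 0) := by
    ext y; simp [secX]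
  rw [this]
  exact (((continuous_const.mul continuous_id).continuousOn.sub
    continuousOn_const).sub hg).preimage_isClosed_of_isClosed isClosed_Icc isClosed_Ici

lemma isCompact_secX (hg : ContinuousOn g (Icc a₁ b₁)) (x : ℝ) :
    IsCompact (secX f g a₁ b₁ x) :=
  isCompact_Icc.of_isClosed_subset (isClosed_secX hg x) secX_subset

lemma measurableSet_secX (hg : ContinuousOn g (Icc a₁ b₁)) (x : ℝ) :
    MeasurableSet (secX f g a₁ b₁ x) := (isClosed_secX hg x).measurableSet

lemma measure_secX_pos (hε : 0 < ε)
    (hx : ∫ y in Icc a₁ b₁, max (x * y - f x - g y) 0 ∂μ₁ = ε) :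
    0 < μ₁ (secX f g a₁ b₁ x) := by
  rcases eq_or_lt_of_le (show (0:ℝ≥0∞) ≤ μ₁ (secX f g a₁ b₁ x) from zero_le) with h0 | h
  · exfalso
    have h2 : ∀ᵐ y ∂(μ₁.restrict (Icc a₁ b₁)), y ∉ secX f g a₁ b₁ x := by
      have : (μ₁.restrict (Icc a₁ b₁)) (secX f g a₁ b₁ x) = 0 :=
        le_antisymm (le_trans (Measure.restrict_apply_le _ _) h0.ge) zero_le
      exact measure_eq_zero_iff_ae_notMem.mp this
    have h1 : ∀ᵐ y ∂(μ₁.restrict (Icc a₁ b₁)), y ∈ Icc a₁ b₁ :=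
      ae_restrict_mem measurableSet_Icc
    have : ∫ y in Icc a₁ b₁, max (x * y - f x - g y) 0 ∂μ₁ = 0 := by
      apply integral_eq_zero_of_ae
      filter_upwards [h1, h2] with y hy1 hy2
      have : ¬ (0 ≤ x * y - f x - g y) := fun h => hy2 ⟨hy1, h⟩
      exact max_eq_right (le_of_lt (not_le.mp this))
    rw [hx] at this; linarith
  · exact h

end core

section core2

variable {a₀ b₀ a₁ b₁ ε : ℝ} {μ₁ : Measure ℝ} {f g : ℝ → ℝ} {x x' : ℝ}

lemma contOn_max {s : Set ℝ} {φ : ℝ → ℝ} (h : ContinuousOn φ s) :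
    ContinuousOn (fun y => max (φ y) 0) s :=
  fun y hy => Filter.Tendsto.max (h y hy) continuousWithinAt_const

lemma contOn_xi (hg : ContinuousOn g (Icc a₁ b₁)) (x : ℝ) :
    ContinuousOn (fun y => x * y - f x - g y) (Icc a₁ b₁) :=
  ((continuous_const.mul continuous_id).continuousOn.sub continuousOn_const).sub hg

lemma integral_secX_eq (hg : ContinuousOn g (Icc a₁ b₁))
    (hx : ∫ y in Icc a₁ b₁, max (x * y - f x - g y) 0 ∂μ₁ = ε) :
    ∫ y in secX f g a₁ b₁ x, (x * y - f x - g y) ∂μ₁ = ε := by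
  have h1 : ∫ y in Icc a₁ b₁, max (x * y - f x - g y) 0 ∂μ₁
      = ∫ y in secX f g a₁ b₁ x, max (x * y - f x - g y) 0 ∂μ₁ :=
    setIntegral_eq_of_subset_of_forall_diff_eq_zero measurableSet_Icc secX_subset
      (fun y hy => max_eq_right (le_of_lt (not_le.mp fun h => hy.2 ⟨hy.1, h⟩)))
  have h2 : ∫ y in secX f g a₁ b₁ x, max (x * y - f x - g y) 0 ∂μ₁
      = ∫ y in secX f g a₁ b₁ x, (x * y - f x - g y) ∂μ₁ :=
    setIntegral_congr_fun (measurableSet_secX hg x) (fun y hy => max_eq_left hy.2)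
  rw [← h2, ← h1, hx]

lemma subgrad_core [IsFiniteMeasure μ₁] (hε : 0 < ε)
    (hg : ContinuousOn g (Icc a₁ b₁))
    (hx : ∫ y in Icc a₁ b₁, max (x * y - f x - g y) 0 ∂μ₁ = ε)
    (hx' : ∫ y in Icc a₁ b₁, max (x' * y - f x' - g y) 0 ∂μ₁ = ε) :
    (x' - x) * Tmap μ₁ f g a₁ b₁ x ≤ f x' - f x := by
  set S := secX f g a₁ b₁ x with hS
  have hSm : MeasurableSet S := measurableSet_secX hg x
  have hSc : IsCompact S := isCompact_secX hg x
  have hpos : 0 < μ₁ S := measure_secX_pos hε hx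
  set m := (μ₁ S).toReal with hm
  have hm0 : 0 < m := ENNReal.toReal_pos hpos.ne' (measure_ne_top _ _)
  set N := ∫ y in S, y ∂μ₁ with hN
  have contξ' : ContinuousOn (fun y => x' * y - f x' - g y) (Icc a₁ b₁) := contOn_xi hg x'
  have int1 : IntegrableOn (fun y => max (x' * y - f x' - g y) 0) (Icc a₁ b₁) μ₁ :=
    (contOn_max contξ').integrableOn_compact isCompact_Icc
  have intS : IntegrableOn (fun y => x' * y - f x' - g y) S μ₁ :=
    ((contξ'.mono secX_subset).integrableOn_compact' hSc hSm)
  have intξS : IntegrableOn (fun y => x * y - f x - g y) S μ₁ :=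
    (((contOn_xi hg x).mono secX_subset).integrableOn_compact' hSc hSm)
  have intyS : IntegrableOn (fun y => y) S μ₁ :=
    continuous_id.continuousOn.integrableOn_compact' hSc hSm
  have intlin : IntegrableOn (fun y => (x' - x) * y - (f x' - f x)) S μ₁ :=
    ((((continuous_const.mul continuous_id).sub continuous_const)).continuousOn.integrableOn_compact' hSc hSm)
  have intmaxS : IntegrableOn (fun y => max (x' * y - f x' - g y) 0) S μ₁ :=
    int1.mono_set secX_subset
  have step1 : ∫ y in S, max (x' * y - f x' - g y) 0 ∂μ₁ ≤ ε := by
    rw [← hx']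
    exact setIntegral_mono_set int1
      (Filter.Eventually.of_forall fun y => le_max_right _ _)
      (HasSubset.Subset.eventuallyLE secX_subset)
  have step2 : ∫ y in S, (x' * y - f x' - g y) ∂μ₁
      ≤ ∫ y in S, max (x' * y - f x' - g y) 0 ∂μ₁ :=
    setIntegral_mono intS intmaxS (fun y => le_max_left _ _)
  have steplin : ∫ y in S, ((x' - x) * y - (f x' - f x)) ∂μ₁
      = (x' - x) * N - (f x' - f x) * m := by
    rw [integral_sub (intyS.const_mul (x' - x))
      (integrableOn_const (measure_ne_top _ _)),
      integral_const_mul, setIntegral_const, measureReal_def, smul_eq_mul, hN, mul_comm m]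
  have step3 : ∫ y in S, (x' * y - f x' - g y) ∂μ₁
      = ε + ((x' - x) * N - (f x' - f x) * m) := by
    have e : (fun y => x' * y - f x' - g y)
        = fun y => (x * y - f x - g y) + ((x' - x) * y - (f x' - f x)) := by
      funext y; ring
    rw [e, integral_add intξS intlin, integral_secX_eq hg hx, steplin]
  have key : (x' - x) * N ≤ (f x' - f x) * m := by
    have := (step3 ▸ step2).trans step1
    linarith
  have hT : Tmap μ₁ f g a₁ b₁ x = N / m := rfl
  rw [hT, mul_div_assoc']
  rw [div_le_iff₀ hm0]
  exact key

end core2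

lemma convexOn_of_subgrad {s : Set ℝ} {F φ : ℝ → ℝ} (hs : Convex ℝ s)
    (h : ∀ x ∈ s, ∀ x' ∈ s, (x' - x) * φ x ≤ F x' - F x) : ConvexOn ℝ s F := by
  refine ⟨hs, fun p hp q hq a b ha hb hab => ?_⟩
  set z := a • p + b • q with hz
  have hzs : z ∈ s := hs hp hq ha hb hab
  have h1 : (p - z) * φ z ≤ F p - F z := h z hzs p hp
  have h2 : (q - z) * φ z ≤ F q - F z := h z hzs q hq
  have hzz : a * (p - z) + b * (q - z) = 0 := by
    simp only [hz, smul_eq_mul]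
    linear_combination (-(a * p + b * q)) * hab
  have := add_le_add (mul_le_mul_of_nonneg_left h1 ha) (mul_le_mul_of_nonneg_left h2 hb)
  have hL : a * ((p - z) * φ z) + b * ((q - z) * φ z) = 0 := by
    have : a * ((p - z) * φ z) + b * ((q - z) * φ z)
        = (a * (p - z) + b * (q - z)) * φ z := by ring
    rw [this, hzz, zero_mul]
  have h3 : (0:ℝ) ≤ a * (F p - F z) + b * (F q - F z) := by linarith
  have h4 : a * F z + b * F z = F z := by linear_combination (F z) * hab
  show F z ≤ a • F p + b • F q
  simp only [smul_eq_mul]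
  linarith

section core3
variable {a₀ b₀ a₁ b₁ ε : ℝ} {μ₁ : Measure ℝ} {f g : ℝ → ℝ} {x : ℝ}

lemma concaveOn_xi (hgc : ConvexOn ℝ (Icc a₁ b₁) g) (x : ℝ) :
    ConcaveOn ℝ (Icc a₁ b₁) (fun y => x * y - f x - g y) := by
  have h1 : ConcaveOn ℝ (Icc a₁ b₁) (fun y => x * y - f x) := by
    refine ⟨convex_Icc _ _, fun p _ q _ a b ha hb hab => ?_⟩
    simp only [smul_eq_mul]
    apply le_of_eq
    linear_combination (-(f x)) * hab
  have h2 := hgc.neg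
  have e : (fun y => x * y - f x - g y) = (fun y => x * y - f x) + (-g) := by
    funext y; simp [Pi.add_apply]; ring
  rw [e]
  exact h1.add h2

lemma secX_structure [IsFiniteMeasure μ₁] (hε : 0 < ε)
    (hg : ContinuousOn g (Icc a₁ b₁)) (hgc : ConvexOn ℝ (Icc a₁ b₁) g)
    (hac : μ₁ ≪ (volume : Measure ℝ))
    (hx : ∫ y in Icc a₁ b₁, max (x * y - f x - g y) 0 ∂μ₁ = ε) :
    ∃ c d : ℝ, c < d ∧ secX f g a₁ b₁ x = Icc c d ∧
      ∀ y ∈ Icc a₁ b₁, x * y - f x - g y = 0 → y = c ∨ y = d := by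
  set S := secX f g a₁ b₁ x with hS
  have hpos : 0 < μ₁ S := measure_secX_pos hε hx
  have hne : S.Nonempty := nonempty_of_measure_ne_zero hpos.ne'
  have hSc : IsCompact S := isCompact_secX hg x
  have hc : sInf S ∈ S := hSc.sInf_mem hne
  have hd : sSup S ∈ S := hSc.sSup_mem hne
  set c := sInf S
  set d := sSup S
  have hconc := concaveOn_xi (f := f) hgc x
  have hSconv : Convex ℝ S := hconc.convex_ge 0
  have hsub : S ⊆ Icc c d := fun y hy => ⟨csInf_le hSc.bddBelow hy, le_csSup hSc.bddAbove hy⟩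
  have hSeq : S = Icc c d := Subset.antisymm hsub (hSconv.ordConnected.out hc hd)
  have hcd : c ≤ d := (hsub hc).2
  have hlt : c < d := by
    rcases eq_or_lt_of_le hcd with h | h
    · exfalso
      have : S = {c} := by rw [hSeq, ← h, Icc_self]
      have : μ₁ S = 0 := by rw [this]; exact hac Real.volume_singleton
      rw [this] at hpos; exact lt_irrefl _ hpos
    · exact h
  refine ⟨c, d, hlt, hSeq, ?_⟩
  intro y₀ hy₀I hy₀0
  have hy₀S : y₀ ∈ S := ⟨hy₀I, hy₀0.ge⟩
  by_contra hcon
  push_neg at hcon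
  obtain ⟨hne_c, hne_d⟩ := hcon
  have hy₀cd : y₀ ∈ Icc c d := hSeq ▸ hy₀S
  have h1 : c < y₀ := lt_of_le_of_ne hy₀cd.1 (Ne.symm hne_c)
  have h2 : y₀ < d := lt_of_le_of_ne hy₀cd.2 hne_d
  -- there is a point with strictly positive ξ
  obtain ⟨y₁, hy₁S, hy₁pos⟩ : ∃ y₁ ∈ S, 0 < x * y₁ - f x - g y₁ := by
    by_contra H
    push_neg at H
    have hzero : ∀ y ∈ S, x * y - f x - g y = 0 := fun y hy =>
      le_antisymm (H y hy) hy.2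
    have : ∫ y in S, (x * y - f x - g y) ∂μ₁ = 0 := by
      rw [setIntegral_congr_fun (measurableSet_secX hg x) hzero, integral_zero]
    rw [integral_secX_eq hg hx] at this
    linarith
  have hy₁I : y₁ ∈ Icc a₁ b₁ := secX_subset hy₁S
  have hdI : d ∈ Icc a₁ b₁ := secX_subset hd
  have hcI : c ∈ Icc a₁ b₁ := secX_subset hc
  rcases lt_or_gt_of_ne (show y₁ ≠ y₀ by intro h; rw [h, hy₀0] at hy₁pos; exact lt_irrefl _ hy₁pos)
    with hlt1 | hlt1
  · -- y₁ < y₀ < d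
    have hden : (0:ℝ) < d - y₁ := by linarith
    have htpos : 0 < (d - y₀) / (d - y₁) := div_pos (by linarith) hden
    have hspos : 0 < (y₀ - y₁) / (d - y₁) := div_pos (by linarith) hden
    have hts : (d - y₀) / (d - y₁) + (y₀ - y₁) / (d - y₁) = 1 := by field_simp; ring
    have hcomb : ((d - y₀) / (d - y₁)) • y₁ + ((y₀ - y₁) / (d - y₁)) • d = y₀ := by
      rw [smul_eq_mul, smul_eq_mul]; field_simp; ring
    have := hconc.2 hy₁I hdI htpos.le hspos.le hts
    rw [hcomb] at this
    simp only [smul_eq_mul] at this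
    have hd2 : 0 ≤ x * d - f x - g d := hd.2
    nlinarith [mul_pos htpos hy₁pos, mul_nonneg hspos.le hd2]
  · -- c < y₀ < y₁
    have hden : (0:ℝ) < y₁ - c := by linarith
    have htpos : 0 < (y₀ - c) / (y₁ - c) := div_pos (by linarith) hden
    have hspos : 0 < (y₁ - y₀) / (y₁ - c) := div_pos (by linarith) hden
    have hts : (y₀ - c) / (y₁ - c) + (y₁ - y₀) / (y₁ - c) = 1 := by field_simp; ring
    have hcomb : ((y₀ - c) / (y₁ - c)) • y₁ + ((y₁ - y₀) / (y₁ - c)) • c = y₀ := by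
      rw [smul_eq_mul, smul_eq_mul]; field_simp; ring
    have := hconc.2 hy₁I hcI htpos.le hspos.le hts
    rw [hcomb] at this
    simp only [smul_eq_mul] at this
    have hc2 : 0 ≤ x * c - f x - g c := hc.2
    nlinarith [mul_pos htpos hy₁pos, mul_nonneg hspos.le hc2]

end core3

section core4
open Filter Topology
variable {a₀ b₀ a₁ b₁ ε : ℝ} {μ₁ : Measure ℝ} {f g : ℝ → ℝ}

lemma tendsto_sec_integral [IsFiniteMeasure μ₁] (hε : 0 < ε) (hab₁ : a₁ ≤ b₁)
    (hg : ContinuousOn g (Icc a₁ b₁)) (hgc : ConvexOn ℝ (Icc a₁ b₁) g)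
    (hf : ContinuousOn f (Icc a₀ b₀))
    (hac : μ₁ ≪ (volume : Measure ℝ))
    (hpot : ∀ x ∈ Icc a₀ b₀, ∫ y in Icc a₁ b₁, max (x * y - f x - g y) 0 ∂μ₁ = ε)
    {x₀ : ℝ} (hx₀ : x₀ ∈ Icc a₀ b₀) (φ : ℝ → ℝ) (hφ : Continuous φ)
    (C : ℝ) (hC : ∀ y ∈ Icc a₁ b₁, |φ y| ≤ C) :
    Tendsto (fun x => ∫ y in secX f g a₁ b₁ x, φ y ∂μ₁) (𝓝[Icc a₀ b₀] x₀)
      (𝓝 (∫ y in secX f g a₁ b₁ x₀, φ y ∂μ₁)) := by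
  obtain ⟨c, d, hlt, hSeq, hzero⟩ := secX_structure hε hg hgc hac (hpot x₀ hx₀)
  have hC0 : 0 ≤ C := (abs_nonneg _).trans (hC a₁ (left_mem_Icc.mpr hab₁))
  have e : ∀ x, ∫ y in secX f g a₁ b₁ x, φ y ∂μ₁
      = ∫ y, (secX f g a₁ b₁ x).indicator φ y ∂μ₁ :=
    fun x => (integral_indicator (measurableSet_secX hg x)).symm
  simp only [e]
  apply tendsto_integral_filter_of_dominated_convergence (bound := fun _ => C)
  · exact Eventually.of_forall fun x =>
      (hφ.stronglyMeasurable.indicator (measurableSet_secX hg x)).aestronglyMeasurable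
  · refine Eventually.of_forall fun x => ae_of_all _ fun y => ?_
    rw [Real.norm_eq_abs, Set.indicator_apply]
    split_ifs with h
    · exact hC y (secX_subset h)
    · simpa using hC0
  · exact integrable_const C
  · have hnull : μ₁ {c, d} = 0 := hac (Set.Countable.measure_zero (by simp) _)
    filter_upwards [measure_eq_zero_iff_ae_notMem.mp hnull] with y hy
    by_cases hyI : y ∈ Icc a₁ b₁
    · have hξcont : ContinuousWithinAt (fun x => x * y - f x - g y) (Icc a₀ b₀) x₀ :=
        (((continuous_id.mul continuous_const).continuousWithinAt).sub (hf x₀ hx₀)).sub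
          continuousWithinAt_const
      rcases lt_trichotomy (x₀ * y - f x₀ - g y) 0 with hneg | hzer | hpos
      · have hev : ∀ᶠ x in 𝓝[Icc a₀ b₀] x₀, x * y - f x - g y < 0 :=
          hξcont (eventually_lt_nhds hneg)
        have h0 : (secX f g a₁ b₁ x₀).indicator φ y = 0 :=
          Set.indicator_of_notMem (fun hmem => absurd hmem.2 (not_le.mpr hneg)) _
        rw [h0]
        apply Tendsto.congr' _ tendsto_const_nhds
        filter_upwards [hev] with x hx
        exact (Set.indicator_of_notMem (fun hmem => absurd hmem.2 (not_le.mpr hx)) _).symm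
      · exact absurd (hzero y hyI hzer) (by simpa using hy)
      · have hev : ∀ᶠ x in 𝓝[Icc a₀ b₀] x₀, 0 < x * y - f x - g y :=
          hξcont (eventually_gt_nhds hpos)
        have h0 : (secX f g a₁ b₁ x₀).indicator φ y = φ y :=
          Set.indicator_of_mem (mem_secX.mpr ⟨hyI, hpos.le⟩) _
        rw [h0]
        apply Tendsto.congr' _ tendsto_const_nhds
        filter_upwards [hev] with x hx
        exact (Set.indicator_of_mem (mem_secX.mpr ⟨hyI, hx.le⟩) _).symm
    · have h0 : ∀ x, (secX f g a₁ b₁ x).indicator φ y = 0 :=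
        fun x => Set.indicator_of_notMem (fun hmem => hyI (secX_subset hmem)) _
      simp only [h0]
      exact tendsto_const_nhds

lemma contOn_Tmap [IsFiniteMeasure μ₁] (hε : 0 < ε) (hab₁ : a₁ ≤ b₁)
    (hg : ContinuousOn g (Icc a₁ b₁)) (hgc : ConvexOn ℝ (Icc a₁ b₁) g)
    (hf : ContinuousOn f (Icc a₀ b₀))
    (hac : μ₁ ≪ (volume : Measure ℝ))
    (hpot : ∀ x ∈ Icc a₀ b₀, ∫ y in Icc a₁ b₁, max (x * y - f x - g y) 0 ∂μ₁ = ε) :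
    ContinuousOn (Tmap μ₁ f g a₁ b₁) (Icc a₀ b₀) := by
  intro x₀ hx₀
  have hN := tendsto_sec_integral hε hab₁ hg hgc hf hac hpot hx₀ (fun y => y) continuous_id
    (max |a₁| |b₁|) (fun y hy => abs_le_max_abs_abs hy.1 hy.2)
  have hm := tendsto_sec_integral hε hab₁ hg hgc hf hac hpot hx₀ (fun _ => (1:ℝ))
    continuous_const 1 (fun y _ => by simp)
  have e : ∀ x : ℝ, (μ₁ (secX f g a₁ b₁ x)).toReal
      = ∫ _ in secX f g a₁ b₁ x, (1:ℝ) ∂μ₁ := fun x => by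
    rw [setIntegral_const]; simp [measureReal_def]
  have hm' : Tendsto (fun x => (μ₁ (secX f g a₁ b₁ x)).toReal) (𝓝[Icc a₀ b₀] x₀)
      (𝓝 ((μ₁ (secX f g a₁ b₁ x₀)).toReal)) := by
    simp only [e]; exact hm
  have hpos : (μ₁ (secX f g a₁ b₁ x₀)).toReal ≠ 0 :=
    (ENNReal.toReal_pos (measure_secX_pos hε (hpot x₀ hx₀)).ne' (measure_ne_top _ _)).ne'
  exact (hN.div hm' hpos : ContinuousWithinAt _ _ _)

end core4

section core5
open Filter Topology

lemma hasDeriv_of_subgrad {s : Set ℝ} {F T : ℝ → ℝ} {x₀ : ℝ} (hx₀ : x₀ ∈ s)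
    (hsub : ∀ x ∈ s, ∀ x' ∈ s, (x' - x) * T x ≤ F x' - F x)
    (hT : ContinuousWithinAt T s x₀) :
    HasDerivWithinAt F (T x₀) s x₀ := by
  rw [hasDerivWithinAt_iff_tendsto_slope]
  have key : ∀ x' ∈ s \ {x₀}, |slope F x₀ x' - T x₀| ≤ |T x' - T x₀| := by
    rintro x' ⟨hx', hne⟩
    have hne' : x' ≠ x₀ := hne
    have h1 := hsub x₀ hx₀ x' hx'
    have h2 := hsub x' hx' x₀ hx₀
    rw [slope_def_field]
    rcases lt_or_gt_of_ne hne' with hlt | hlt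
    · -- x' < x₀
      have hd : x' - x₀ < 0 := by linarith
      have e1 : (F x' - F x₀) / (x' - x₀) ≤ T x₀ := by
        rw [div_le_iff_of_neg hd]
        nlinarith
      have e2 : T x' ≤ (F x' - F x₀) / (x' - x₀) := by
        rw [le_div_iff_of_neg hd]
        nlinarith
      rw [abs_of_nonpos (by linarith), abs_sub_comm, abs_of_nonneg (by linarith)]
      linarith
    · -- x₀ < x'
      have hd : 0 < x' - x₀ := by linarith
      have e1 : T x₀ ≤ (F x' - F x₀) / (x' - x₀) := by
        rw [le_div_iff₀ hd]
        nlinarith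
      have e2 : (F x' - F x₀) / (x' - x₀) ≤ T x' := by
        rw [div_le_iff₀ hd]
        nlinarith
      rw [abs_of_nonneg (by linarith), abs_of_nonneg (by linarith)]
      linarith
  have hT' : Tendsto T (𝓝[s \ {x₀}] x₀) (𝓝 (T x₀)) := hT.mono diff_subset
  have habs : Tendsto (fun x' => |T x' - T x₀|) (𝓝[s \ {x₀}] x₀) (𝓝 0) := by
    have := (hT'.sub (tendsto_const_nhds (x := T x₀))).abs
    simpa using this
  rw [tendsto_iff_dist_tendsto_zero]
  refine squeeze_zero' (Eventually.of_forall fun _ => dist_nonneg) ?_ habs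
  filter_upwards [self_mem_nhdsWithin] with x' hx'
  rw [Real.dist_eq]
  exact key x' hx'

end core5

section core6
variable {a₀ b₀ a₁ b₁ ε : ℝ} {μ₁ : Measure ℝ} {f g : ℝ → ℝ} {x : ℝ}

lemma Tmap_mem_interior [IsFiniteMeasure μ₁] (hε : 0 < ε)
    (hg : ContinuousOn g (Icc a₁ b₁)) (hgc : ConvexOn ℝ (Icc a₁ b₁) g)
    (hac : μ₁ ≪ (volume : Measure ℝ))
    (hx : ∫ y in Icc a₁ b₁, max (x * y - f x - g y) 0 ∂μ₁ = ε) :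
    Tmap μ₁ f g a₁ b₁ x ∈ interior (secX f g a₁ b₁ x) := by
  obtain ⟨c, d, hlt, hSeq, _⟩ := secX_structure hε hg hgc hac hx
  set S := secX f g a₁ b₁ x with hS
  have hSm : MeasurableSet S := measurableSet_secX hg x
  have hSc : IsCompact S := isCompact_secX hg x
  have hpos : 0 < μ₁ S := measure_secX_pos hε hx
  set m := (μ₁ S).toReal with hm
  have hm0 : 0 < m := ENNReal.toReal_pos hpos.ne' (measure_ne_top _ _)
  set N := ∫ y in S, y ∂μ₁ with hN
  have intyS : IntegrableOn (fun y => y) S μ₁ :=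
    continuous_id.continuousOn.integrableOn_compact' hSc hSm
  have intc : IntegrableOn (fun _ => c) S μ₁ := integrableOn_const (measure_ne_top _ _)
  have intd : IntegrableOn (fun _ => d) S μ₁ := integrableOn_const (measure_ne_top _ _)
  rw [hSeq, interior_Icc]
  have hup : 0 < ∫ y in S, (d - y) ∂μ₁ := by
    rw [setIntegral_pos_iff_support_of_nonneg_ae]
    · have hsub : S \ {d} ⊆ Function.support (fun y => d - y) ∩ S := fun y hy =>
        ⟨sub_ne_zero_of_ne (Ne.symm hy.2), hy.1⟩
      calc (0:ℝ≥0∞) < μ₁ S := hpos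
        _ = μ₁ (S \ {d}) := (measure_diff_null (hac Real.volume_singleton)).symm
        _ ≤ μ₁ (Function.support (fun y => d - y) ∩ S) := measure_mono hsub
    · filter_upwards [ae_restrict_mem hSm] with y hy
      have : y ≤ d := (hSeq ▸ hy).2
      simp only [Pi.zero_apply]; linarith
    · exact (continuous_const.sub continuous_id).continuousOn.integrableOn_compact' hSc hSm
  have hlo : 0 < ∫ y in S, (y - c) ∂μ₁ := by
    rw [setIntegral_pos_iff_support_of_nonneg_ae]
    · have hsub : S \ {c} ⊆ Function.support (fun y => y - c) ∩ S := fun y hy =>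
        ⟨sub_ne_zero_of_ne hy.2, hy.1⟩
      calc (0:ℝ≥0∞) < μ₁ S := hpos
        _ = μ₁ (S \ {c}) := (measure_diff_null (hac Real.volume_singleton)).symm
        _ ≤ μ₁ (Function.support (fun y => y - c) ∩ S) := measure_mono hsub
    · filter_upwards [ae_restrict_mem hSm] with y hy
      have : c ≤ y := (hSeq ▸ hy).1
      simp only [Pi.zero_apply]; linarith
    · exact (continuous_id.sub continuous_const).continuousOn.integrableOn_compact' hSc hSm
  have eup : ∫ y in S, (d - y) ∂μ₁ = d * m - N := by
    rw [integral_sub intd intyS, setIntegral_const, measureReal_def, smul_eq_mul, ← hN, mul_comm]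
  have elo : ∫ y in S, (y - c) ∂μ₁ = N - c * m := by
    rw [integral_sub intyS intc, setIntegral_const, measureReal_def, smul_eq_mul, ← hN, mul_comm]
  have hT : Tmap μ₁ f g a₁ b₁ x = N / m := rfl
  rw [hT]
  constructor
  · rw [lt_div_iff₀ hm0]; rw [eup] at hup; rw [elo] at hlo; linarith
  · rw [div_lt_iff₀ hm0]; rw [eup] at hup; linarith
end core6


theorem stmt1
    (a₀ b₀ a₁ b₁ lam Lam : ℝ) (μ₀ μ₁ : Measure ℝ) (u₀ u₁ : ℝ → ℝ)
    (hab₀ : a₀ < b₀) (hab₁ : a₁ < b₁) (hlam : 0 < lam)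
    (hμ₀ : IsGoodMarginal μ₀ u₀ a₀ b₀ lam Lam)
    (hμ₁ : IsGoodMarginal μ₁ u₁ a₁ b₁ lam Lam)
    (ε : ℝ) (hε : 0 < ε) (f g : ℝ → ℝ)
    (hfg : IsPotentialPair μ₀ μ₁ a₀ b₀ a₁ b₁ ε f g) :
    ConvexOn ℝ (Icc a₀ b₀) f ∧
    ContinuousOn (Tmap μ₁ f g a₁ b₁) (Icc a₀ b₀) ∧
    (∀ x ∈ Icc a₀ b₀, HasDerivWithinAt f (Tmap μ₁ f g a₁ b₁ x) (Icc a₀ b₀) x) ∧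
    (∀ x ∈ Icc a₀ b₀,
      Tmap μ₁ f g a₁ b₁ x =
        (∫ y in secX f g a₁ b₁ x, y ∂μ₁) / (μ₁ (secX f g a₁ b₁ x)).toReal ∧
      Tmap μ₁ f g a₁ b₁ x ∈ interior (secX f g a₁ b₁ x)) := by
  obtain ⟨hμ₁P, hμ₁d, -, -⟩ := hμ₁
  obtain ⟨hμ₀P, hμ₀d, -, -⟩ := hμ₀
  obtain ⟨hLf, hLg, hpot1, hpot0⟩ := hfg
  have hac₁ : μ₁ ≪ (volume : Measure ℝ) := by
    rw [hμ₁d]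
    exact (withDensity_absolutelyContinuous _ _).trans
      Measure.restrict_le_self.absolutelyContinuous
  obtain ⟨Kf, hKf⟩ := hLf
  obtain ⟨Kg, hKg⟩ := hLg
  have hfc : ContinuousOn f (Icc a₀ b₀) := hKf.continuousOn
  have hgcont : ContinuousOn g (Icc a₁ b₁) := hKg.continuousOn
  have hpot0' : ∀ y ∈ Icc a₁ b₁, ∫ x in Icc a₀ b₀, max (y * x - g y - f x) 0 ∂μ₀ = ε := by
    intro y hy
    rw [← hpot0 y hy]
    congr 1
    funext x
    congr 1
    ring
  have hgsub : ∀ y ∈ Icc a₁ b₁, ∀ y' ∈ Icc a₁ b₁,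
      (y' - y) * Tmap μ₀ g f a₀ b₀ y ≤ g y' - g y :=
    fun y hy y' hy' => subgrad_core hε hfc (hpot0' y hy) (hpot0' y' hy')
  have hgconv : ConvexOn ℝ (Icc a₁ b₁) g := convexOn_of_subgrad (convex_Icc _ _) hgsub
  have hfsub : ∀ x ∈ Icc a₀ b₀, ∀ x' ∈ Icc a₀ b₀,
      (x' - x) * Tmap μ₁ f g a₁ b₁ x ≤ f x' - f x :=
    fun x hx x' hx' => subgrad_core hε hgcont (hpot1 x hx) (hpot1 x' hx')
  have hfconv : ConvexOn ℝ (Icc a₀ b₀) f := convexOn_of_subgrad (convex_Icc _ _) hfsub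
  have hTcont : ContinuousOn (Tmap μ₁ f g a₁ b₁) (Icc a₀ b₀) :=
    contOn_Tmap hε hab₁.le hgcont hgconv hfc hac₁ hpot1
  exact ⟨hfconv, hTcont, fun x hx => hasDeriv_of_subgrad hx hfsub (hTcont x hx),
    fun x hx => ⟨rfl, Tmap_mem_interior hε hgcont hgconv hac₁ (hpot1 x hx)⟩⟩
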